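/- In the setting of a proper right action of G on a tree X with connected fundamental domain T, let G° := {g ∈ G : g fixes a vertex of T}. For components c, d of X \ T and g ∉ G°, one has X_c·g ⊆ X_d if and only if g ∈ W_d and g⁻¹ ∉ W_c. -/

import Mathlib

/-- `C` is a connected component of the subset `K` of the graph `X`:
a maximal nonempty connected subset of `K`. -/
def IsCompOf {V : Type*} (X : SimpleGraph V) (K C : Set V) : Prop :=
  C.Nonempty ∧ C ⊆ K ∧ (X.induce C).Connected ∧
    ∀ D : Set V, C ⊆ D → D ⊆ K → (X.induce D).Connected → D = C

/-- `W_C = {g ∈ G : T·g ⊆ C}` for a right action `act` of `G`. -/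
def Wset {V G : Type*} (act : V → G → V) (T C : Set V) : Set G :=
  {g | ∀ v ∈ T, act v g ∈ C}

private lemma conn_image' {V : Type*} (X : SimpleGraph V) (e : V ≃ V)
    (he : ∀ u v, X.Adj u v ↔ X.Adj (e u) (e v))
    (S : Set V) (h : (X.induce S).Connected) : (X.induce (e '' S)).Connected := by
  have iso : X.induce S ≃g X.induce (e '' S) :=
    { toFun := fun x => ⟨e x, Set.mem_image_of_mem e x.2⟩
      invFun := fun y => ⟨e.symm y, by
        obtain ⟨x, hx, hxy⟩ := y.2
        simpa [← hxy] using hx⟩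
      left_inv := fun x => Subtype.ext (e.symm_apply_apply x)
      right_inv := fun y => Subtype.ext (e.apply_symm_apply y)
      map_rel_iff' := fun {a b} => (he a b).symm }
  exact iso.connected_iff.mp h

private lemma exists_crossing' {V : Type*} {X : SimpleGraph V} {C : Set V} :
    ∀ {a b : V}, X.Walk a b → a ∈ C → b ∉ C → ∃ u w, u ∈ C ∧ w ∉ C ∧ X.Adj u w := by
  intro a b p
  induction p with
  | nil => intro ha hb; exact absurd ha hb
  | @cons a a' b h p ih =>
    intro ha hb
    by_cases hm : a' ∈ C
    · exact ih hm hb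
    · exact ⟨a, a', ha, hm, h⟩

/-- A connected subset of `K` meeting a component of `K` lies in that component. -/
private lemma subset_comp_of_meet {V : Type*} {X : SimpleGraph V} {K C : Set V}
    (hC : IsCompOf X K C) {S : Set V} (hSK : S ⊆ K) (hScon : (X.induce S).Connected)
    (hmeet : (S ∩ C).Nonempty) : S ⊆ C := by
  have := hC.2.2.2 (C ∪ S) Set.subset_union_left
    (Set.union_subset hC.2.1 hSK)
    (SimpleGraph.induce_union_connected hC.2.2.1.preconnected hScon.preconnected
      (by obtain ⟨x, hx1, hx2⟩ := hmeet; exact ⟨x, hx2, hx1⟩))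
  rw [← this]
  exact Set.subset_union_right

/-- A vertex of `K` adjacent to a component of `K` lies in it. -/
private lemma mem_comp_of_adj {V : Type*} {X : SimpleGraph V} {K C : Set V}
    (hC : IsCompOf X K C) {u w : V} (hu : u ∈ C) (hw : w ∈ K) (ha : X.Adj u w) : w ∈ C := by
  have hsub : ({u, w} : Set V) ⊆ C :=
    subset_comp_of_meet hC (by
      rintro x (rfl | rfl)
      exacts [hC.2.1 hu, hw])
      (SimpleGraph.induce_pair_connected_of_adj ha)
      ⟨u, by simp, hu⟩
  exact hsub (by simp)

/-- In the setting of a proper right action of `G` on a tree `X` (without edge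
inversions) with connected fundamental domain `T`, let `G° = {g : g fixes a vertex of
T}`.  For components `C, D` of `X \ T` and `g ∉ G°`, one has `X_C·g ⊆ X_D` if and only
if `g ∈ W_D` and `g⁻¹ ∉ W_C`. -/
theorem comp_maps_iff_of_not_elliptic {V G : Type*} [Group G] (X : SimpleGraph V)
    (htree : X.IsTree)
    (act : V → G → V)
    (hact1 : ∀ v, act v 1 = v)
    (hactmul : ∀ v (g h : G), act (act v g) h = act v (g * h))
    (hadj : ∀ (g : G) (u v : V), X.Adj u v ↔ X.Adj (act u g) (act v g))
    (hnoinv : ∀ (g : G) (u v : V), X.Adj u v → ¬(act u g = v ∧ act v g = u))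
    (hproper : ∀ v : V, {g : G | act v g = v}.Finite)
    (T : Set V) (hTconn : (X.induce T).Connected)
    (hfund : ∀ v : V, ∃! u, u ∈ T ∧ ∃ g : G, act v g = u)
    (C D : Set V) (hC : IsCompOf X Tᶜ C) (hD : IsCompOf X Tᶜ D)
    (g : G) (hg : ¬ ∃ v ∈ T, act v g = v) :
    (∀ v ∈ C, act v g ∈ D) ↔ (g ∈ Wset act T D ∧ g⁻¹ ∉ Wset act T C) := by
  -- basic inverses
  have hinv : ∀ (h : G) (v : V), act (act v h) h⁻¹ = v := fun h v => by
    rw [hactmul, mul_inv_cancel, hact1]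
  have hinv' : ∀ (h : G) (v : V), act (act v h⁻¹) h = v := fun h v => by
    rw [hactmul, inv_mul_cancel, hact1]
  -- the equivalences given by g and g⁻¹
  have mkE : ∀ h : G, ∃ e : V ≃ V, ∀ v, e v = act v h := fun h =>
    ⟨⟨fun v => act v h, fun v => act v h⁻¹, fun v => hinv h v, fun v => hinv' h v⟩,
      fun _ => rfl⟩
  -- g⁻¹ fixes no point of T either
  have hg' : ¬ ∃ v ∈ T, act v g⁻¹ = v := by
    rintro ⟨v, hv, hfix⟩
    exact hg ⟨v, hv, by conv_lhs => rw [← hfix]; rw [hinv']⟩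
  -- translates of T avoid T
  have hTdisj : ∀ (h : G), (¬ ∃ v ∈ T, act v h = v) → ∀ t ∈ T, act t h ∉ T := by
    intro h hh t ht hmem
    obtain ⟨u, -, huniq⟩ := hfund t
    have h1 : act t h = u := huniq _ ⟨hmem, h, rfl⟩
    have h2 : t = u := huniq _ ⟨ht, 1, hact1 t⟩
    exact hh ⟨t, ht, by rw [h1, ← h2]⟩
  -- images of connected sets are connected
  have himg : ∀ (h : G) (S : Set V), (X.induce S).Connected →
      (X.induce ((fun v => act v h) '' S)).Connected := by
    intro h S hS
    obtain ⟨e, he⟩ := mkE h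
    have : (fun v => act v h) '' S = e '' S := by
      ext x; simp [he]
    rw [this]
    exact conn_image' X e (fun u v => by rw [he u, he v]; exact hadj h u v) S hS
  -- T·g and T·g⁻¹ lie in Tᶜ
  have hTg : ((fun v => act v g) '' T) ⊆ Tᶜ := by
    rintro x ⟨t, ht, rfl⟩
    exact hTdisj g hg t ht
  have hTg' : ((fun v => act v g⁻¹) '' T) ⊆ Tᶜ := by
    rintro x ⟨t, ht, rfl⟩
    exact hTdisj g⁻¹ hg' t ht
  -- there is an edge from C to T
  obtain ⟨v0, hv0⟩ := hC.1
  obtain ⟨t0, ⟨ht0, -⟩, -⟩ := hfund v0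
  obtain ⟨u, w, hu, hwnC, hadj_uw⟩ :=
    exists_crossing' ((htree.isConnected.preconnected v0 t0).some) hv0
      (fun hc => hC.2.1 hc ht0)
  have hwT : w ∈ T := by
    by_contra hwT
    exact hwnC (mem_comp_of_adj hC hu hwT hadj_uw)
  constructor
  · intro H
    have hug : act u g ∈ D := H u hu
    have hwg : act w g ∈ D :=
      mem_comp_of_adj hD hug (hTdisj g hg w hwT) ((hadj g u w).mp hadj_uw)
    have hTgD : ((fun v => act v g) '' T) ⊆ D :=
      subset_comp_of_meet hD hTg (himg g T hTconn)
        ⟨act w g, Set.mem_image_of_mem _ hwT, hwg⟩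
    refine ⟨fun t ht => hTgD (Set.mem_image_of_mem _ ht), fun hWC => ?_⟩
    have : act w g⁻¹ ∈ C := hWC w hwT
    have := H _ this
    rw [hinv'] at this
    exact hD.2.1 this hwT
  · rintro ⟨hWD, hnWC⟩ v hv
    -- C·g avoids T
    have hCg : ((fun v => act v g) '' C) ⊆ Tᶜ := by
      rintro x ⟨c, hc, rfl⟩ hxT
      have hcC : act (act c g) g⁻¹ ∈ C := by rw [hinv]; exact hc
      have : ((fun v => act v g⁻¹) '' T) ⊆ C :=
        subset_comp_of_meet hC hTg' (himg g⁻¹ T hTconn)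
          ⟨act (act c g) g⁻¹, Set.mem_image_of_mem _ hxT, hcC⟩
      exact hnWC (fun t ht => this (Set.mem_image_of_mem _ ht))
    have hug : act u g ∈ D :=
      mem_comp_of_adj hD (hWD w hwT) (hCg (Set.mem_image_of_mem _ hu))
        ((hadj g w u).mp hadj_uw.symm)
    have hCgD : ((fun v => act v g) '' C) ⊆ D :=
      subset_comp_of_meet hD hCg (himg g C hC.2.2.1)
        ⟨act u g, Set.mem_image_of_mem _ hu, hug⟩
    exact hCgD (Set.mem_image_of_mem _ hv)
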